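/- Let G be a symmetric n×n integer matrix with det G ≠ 0. Then there exist a matrix M ∈ Mₙ(ℤ) with odd determinant, a natural number n₂ with 0 ≤ n₂ ≤ n, a symmetric n₂×n₂ integer matrix G₁ with odd determinant, and a symmetric (n−n₂)×(n−n₂) integer matrix G₂, such that MᵀGM is the block diagonal matrix with diagonal blocks G₁ and 2·G₂. (Equivalently: every nondegenerate integral lattice contains a sublattice of odd index isometric to L₁ ⊥ L₂(2) with L₁ of odd determinant.) -/

import Mathlib

open Matrix


lemma conj_entry {n : ℕ} {α : Type*} [CommRing α] (M G : Matrix (Fin n) (Fin n) α) (i j : Fin n) :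
    (Mᵀ * G * M) i j = (fun k => M k i) ⬝ᵥ (G *ᵥ (fun k => M k j)) := by
  simp only [mul_apply, transpose_apply, dotProduct, mulVec, dotProduct, Finset.sum_mul,
    Finset.mul_sum]
  rw [Finset.sum_comm]
  exact Finset.sum_congr rfl fun k _ => Finset.sum_congr rfl fun l _ => by ring

lemma odd_iff_cast_ne {m : ℤ} : Odd m ↔ (m : ZMod 2) ≠ 0 := by
  rw [← Int.not_even_iff_odd, Ne, ZMod.intCast_zmod_eq_zero_iff_dvd]
  have h2 : ((2:ℕ):ℤ) = 2 := by norm_num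
  rw [h2, ← even_iff_two_dvd]

lemma dp_sum_right {m ι α : Type*} [Fintype m] [Fintype ι] [CommRing α]
    (x : m → α) (f : ι → m → α) : x ⬝ᵥ (∑ i, f i) = ∑ i, x ⬝ᵥ f i := by
  simp only [dotProduct, Finset.sum_apply, Finset.mul_sum]
  exact Finset.sum_comm

lemma dp_sum_left {m ι α : Type*} [Fintype m] [Fintype ι] [CommRing α]
    (x : m → α) (f : ι → m → α) : (∑ i, f i) ⬝ᵥ x = ∑ i, f i ⬝ᵥ x := by
  simp only [dotProduct, Finset.sum_apply, Finset.sum_mul]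
  exact Finset.sum_comm

lemma mv_sum {m ι α : Type*} [Fintype m] [Fintype ι] [CommRing α]
    (G : Matrix m m α) (f : ι → m → α) : G *ᵥ (∑ i, f i) = ∑ i, G *ᵥ f i := by
  simpa only [Matrix.mulVecLin_apply] using map_sum G.mulVecLin f Finset.univ

lemma mv_smul {m α : Type*} [Fintype m] [CommRing α]
    (G : Matrix m m α) (a : α) (x : m → α) : G *ᵥ (a • x) = a • (G *ᵥ x) := by
  simpa only [Matrix.mulVecLin_apply] using map_smul G.mulVecLin a x

/-- Mod 2 splitting: basis adapted to the radical. -/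
lemma mod2_split {n : ℕ} (G : Matrix (Fin n) (Fin n) ℤ) (hG : G.IsSymm) :
    ∃ (n₂ : ℕ) (hle : n₂ ≤ n) (M : Matrix (Fin n) (Fin n) ℤ)
      (e : Fin n ≃ (Fin n₂ ⊕ Fin (n - n₂))),
      Odd M.det ∧
      Odd ((Mᵀ * G * M).submatrix e.symm e.symm).toBlocks₁₁.det ∧
      (∀ i j, (2:ℤ) ∣ (Mᵀ * G * M) i (e.symm (Sum.inr j))) ∧
      (∀ i j, (2:ℤ) ∣ (Mᵀ * G * M) (e.symm (Sum.inr i)) j) := by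
  classical
  set c : ℤ →+* ZMod 2 := Int.castRingHom (ZMod 2) with hc
  set Gb : Matrix (Fin n) (Fin n) (ZMod 2) := G.map c with hGb
  have hGbs : Gb.IsSymm := by
    rw [Matrix.IsSymm, ← Matrix.transpose_map, hG.eq]
  set R := LinearMap.ker Gb.mulVecLin with hR
  obtain ⟨W, hWR⟩ := Submodule.exists_isCompl R
  have hsum : Module.finrank (ZMod 2) W + Module.finrank (ZMod 2) R = n := by
    rw [Submodule.finrank_add_eq_of_isCompl hWR.symm]
    simp [Module.finrank_pi]
  set n₂ := Module.finrank (ZMod 2) W with hn₂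
  have hle : n₂ ≤ n := by omega
  have hrR : Module.finrank (ZMod 2) R = n - n₂ := by omega
  let bW : Module.Basis (Fin n₂) (ZMod 2) W := Module.finBasisOfFinrankEq _ _ rfl
  let bR : Module.Basis (Fin (n - n₂)) (ZMod 2) R := Module.finBasisOfFinrankEq _ _ hrR
  let b0 : Module.Basis (Fin n₂ ⊕ Fin (n - n₂)) (ZMod 2) (Fin n → ZMod 2) :=
    (bW.prod bR).map (Submodule.prodEquivOfIsCompl W R hWR.symm)
  have hadd : n₂ + (n - n₂) = n := by omega
  let e : Fin n ≃ (Fin n₂ ⊕ Fin (n - n₂)) := (finSumFinEquiv.trans (finCongr hadd)).symm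
  let b : Module.Basis (Fin n) (ZMod 2) (Fin n → ZMod 2) := b0.reindex e.symm
  have hb : ∀ j, b j = b0 (e j) := by intro j; simp [b]
  set M : Matrix (Fin n) (Fin n) ℤ := Matrix.of (fun i j => ((b j i).val : ℤ)) with hM
  have hMc : M.map c = Matrix.of (fun i j => b j i) := by
    ext i j
    simp [hM, hc, ZMod.natCast_val, ZMod.cast_id]
  have hdetM : Odd M.det := by
    rw [odd_iff_cast_ne]
    have h1 : ((M.det : ℤ) : ZMod 2) = (M.map c).det := by
      have := RingHom.map_det c M
      rwa [RingHom.mapMatrix_apply] at this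
    rw [h1, hMc]
    have h2 : Matrix.of (fun i j => b j i) = (Pi.basisFun (ZMod 2) (Fin n)).toMatrix b := by
      ext i j; simp [Module.Basis.toMatrix_apply]
    rw [h2, ← Module.Basis.det_apply]
    exact ((Pi.basisFun (ZMod 2) (Fin n)).isUnit_det b).ne_zero
  set H := Mᵀ * G * M with hHdef
  have hHs : H.IsSymm := by
    rw [Matrix.IsSymm, hHdef]
    rw [Matrix.transpose_mul, Matrix.transpose_mul, Matrix.transpose_transpose, hG.eq, mul_assoc]
  have hHmap : ∀ i j, c (H i j) = (b i) ⬝ᵥ (Gb *ᵥ (b j)) := by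
    intro i j
    have h1 : c (H i j) = ((M.map c)ᵀ * Gb * (M.map c)) i j := by
      rw [hHdef, hGb, ← Matrix.transpose_map, ← Matrix.map_mul, ← Matrix.map_mul]; rfl
    rw [h1, conj_entry]
    have h2 : (fun k => (M.map c) k i) = b i := by funext k; rw [hMc]; rfl
    have h3 : (fun k => (M.map c) k j) = b j := by funext k; rw [hMc]; rfl
    rw [h2, h3]
  have hbR : ∀ t, Gb *ᵥ (b (e.symm (Sum.inr t))) = 0 := by
    intro t
    have hmem : b (e.symm (Sum.inr t)) ∈ R := by
      rw [hb]
      simp only [Equiv.apply_symm_apply, b0, Module.Basis.map_apply,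
        Submodule.coe_prodEquivOfIsCompl']
      have : (bW.prod bR) (Sum.inr t) = (0, bR t) := by
        ext
        · simp [Module.Basis.prod_apply_inr_fst]
        · simp [Module.Basis.prod_apply_inr_snd]
      rw [this]
      simp
    exact hmem
  have hdvd : ∀ m : ℤ, c m = 0 → (2:ℤ) ∣ m := by
    intro m hm
    have := (ZMod.intCast_zmod_eq_zero_iff_dvd m 2).1 hm
    exact_mod_cast this
  have hcol : ∀ i t, (2:ℤ) ∣ H i (e.symm (Sum.inr t)) := by
    intro i t
    apply hdvd
    rw [hHmap, hbR]
    simp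
  have hrow : ∀ t j, (2:ℤ) ∣ H (e.symm (Sum.inr t)) j := by
    intro t j
    rw [hHs.apply]
    exact hcol j t
  -- symmetry of the mod-2 pairing
  have hsymdot : ∀ x y : Fin n → ZMod 2, x ⬝ᵥ (Gb *ᵥ y) = y ⬝ᵥ (Gb *ᵥ x) := by
    intro x y
    rw [Matrix.dotProduct_mulVec, ← hGbs.eq, Matrix.vecMul_transpose, dotProduct_comm,
      hGbs.eq]
  -- the top-left block is nondegenerate mod 2
  set A : Matrix (Fin n₂) (Fin n₂) ℤ := ((Mᵀ * G * M).submatrix e.symm e.symm).toBlocks₁₁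
    with hA
  have hAentry : ∀ i j, A i j = H (e.symm (Sum.inl i)) (e.symm (Sum.inl j)) := by
    intro i j; rfl
  have hbW : ∀ s, b (e.symm (Sum.inl s)) = (bW s : Fin n → ZMod 2) := by
    intro s
    rw [hb]
    simp only [Equiv.apply_symm_apply, b0, Module.Basis.map_apply,
      Submodule.coe_prodEquivOfIsCompl']
    have : (bW.prod bR) (Sum.inl s) = (bW s, 0) := by
      ext
      · simp [Module.Basis.prod_apply_inl_fst]
      · simp [Module.Basis.prod_apply_inl_snd]
    rw [this]
    simp
  have hdetA : Odd A.det := by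
    rw [odd_iff_cast_ne]
    have h1 : ((A.det : ℤ) : ZMod 2) = (A.map c).det := by
      have := RingHom.map_det c A
      rwa [RingHom.mapMatrix_apply] at this
    rw [h1]
    intro hzero
    obtain ⟨v, hv, hAv⟩ := (Matrix.exists_mulVec_eq_zero_iff).2 hzero
    set w : Fin n → ZMod 2 := ∑ j, v j • (bW j : Fin n → ZMod 2) with hw
    have hwW : w ∈ W := by
      apply Submodule.sum_mem
      intro j _
      exact Submodule.smul_mem _ _ (bW j).2
    have hGw : ∀ i, (bW i : Fin n → ZMod 2) ⬝ᵥ (Gb *ᵥ w) = 0 := by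
      intro i
      have hlin : Gb *ᵥ w = ∑ j, v j • (Gb *ᵥ (bW j : Fin n → ZMod 2)) := by
        rw [hw, mv_sum]
        exact Finset.sum_congr rfl fun j _ => mv_smul _ _ _
      rw [hlin]
      rw [dp_sum_right]
      have : ∀ j, (bW i : Fin n → ZMod 2) ⬝ᵥ (v j • (Gb *ᵥ (bW j : Fin n → ZMod 2)))
          = (A.map c) i j * v j := by
        intro j
        rw [dotProduct_smul]
        have : (A.map c) i j = (bW i : Fin n → ZMod 2) ⬝ᵥ (Gb *ᵥ (bW j : Fin n → ZMod 2)) := by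
          show c (A i j) = _
          rw [hAentry, hHmap, hbW, hbW]
        rw [this, smul_eq_mul, mul_comm]
      rw [Finset.sum_congr rfl fun j _ => this j]
      have : ∑ j, (A.map c) i j * v j = ((A.map c) *ᵥ v) i := rfl
      rw [this, hAv]
      rfl
    have hGwall : Gb *ᵥ w = 0 := by
      funext k
      have huniv : ∀ u : Fin n → ZMod 2, u ⬝ᵥ (Gb *ᵥ w) = 0 := by
        intro u
        have hu : u ∈ W ⊔ R := by
          rw [hWR.symm.sup_eq_top]; trivial
        obtain ⟨y, hy, z, hz, rfl⟩ := Submodule.mem_sup.1 hu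
        rw [add_dotProduct]
        have hyz : z ⬝ᵥ (Gb *ᵥ w) = 0 := by
          rw [hsymdot]
          have : Gb *ᵥ z = 0 := hz
          rw [this, dotProduct_zero]
        have hyy : y ⬝ᵥ (Gb *ᵥ w) = 0 := by
          have hrepr := Module.Basis.sum_repr bW ⟨y, hy⟩
          have hcoe : y = ∑ i, (bW.repr ⟨y, hy⟩) i • (bW i : Fin n → ZMod 2) := by
            conv_lhs => rw [show y = ((⟨y, hy⟩ : W) : Fin n → ZMod 2) from rfl, ← hrepr]
            push_cast
            rfl
          rw [hcoe, dp_sum_left]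
          apply Finset.sum_eq_zero
          intro i _
          rw [smul_dotProduct, hGw, smul_zero]
        rw [hyz, hyy, add_zero]
      have := huniv (Pi.single k 1)
      rwa [single_dotProduct, one_mul] at this
    have hwR : w ∈ R := hGwall
    have hw0 : w = 0 := by
      have := Submodule.disjoint_def.1 hWR.disjoint w hwR hwW
      exact this
    have : ∀ j, v j = 0 := by
      have hli := Fintype.linearIndependent_iff.1 bW.linearIndependent v
      apply hli
      apply Subtype.coe_injective
      push_cast
      rw [← hw, hw0]
    exact hv (funext this)
  exact ⟨n₂, hle, M, e, hdetM, hdetA, hcol, hrow⟩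

/-- Every nondegenerate integral lattice contains a sublattice of odd
index isometric to `L₁ ⊥ L₂(2)` where `L₁` has odd determinant: in matrix terms,
there are `M ∈ Mₙ(ℤ)` of odd determinant and symmetric integer matrices `G₁`
(of odd determinant) and `G₂` with `MᵀGM` equal (after reindexing) to the block
diagonal matrix with blocks `G₁` and `2·G₂`. -/
theorem exists_odd_index_sublattice_splitting
    {n : ℕ} (G : Matrix (Fin n) (Fin n) ℤ) (hG : G.IsSymm) (hdet : G.det ≠ 0) :
    ∃ (n₂ : ℕ) (_ : n₂ ≤ n) (M : Matrix (Fin n) (Fin n) ℤ)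
      (G₁ : Matrix (Fin n₂) (Fin n₂) ℤ)
      (G₂ : Matrix (Fin (n - n₂)) (Fin (n - n₂)) ℤ)
      (e : Fin n ≃ (Fin n₂ ⊕ Fin (n - n₂))),
      Odd M.det ∧ G₁.IsSymm ∧ Odd G₁.det ∧ G₂.IsSymm ∧
        Mᵀ * G * M = (Matrix.fromBlocks G₁ 0 0 ((2 : ℤ) • G₂)).submatrix e e := by  classical
  classical
  obtain ⟨n₂, hle, M, e, hMdet, hAdet, hcolv, hrowv⟩ := mod2_split G hG
  set H : Matrix (Fin n) (Fin n) ℤ := Mᵀ * G * M with hHdef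
  have hHs : H.IsSymm := by
    rw [Matrix.IsSymm, hHdef, Matrix.transpose_mul, Matrix.transpose_mul,
      Matrix.transpose_transpose, hG.eq, mul_assoc]
  set H' := H.submatrix e.symm e.symm with hH'
  have hH's : H'.IsSymm := by
    rw [Matrix.IsSymm, hH', Matrix.transpose_submatrix, hHs.eq]
  set A := H'.toBlocks₁₁ with hA
  set B₂ := H'.toBlocks₁₂ with hB₂
  set C₂ := H'.toBlocks₂₂ with hC₂
  have hAs : A.IsSymm := by
    rw [Matrix.IsSymm]
    ext i j
    simp only [Matrix.transpose_apply, hA, Matrix.toBlocks₁₁, Matrix.of_apply]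
    exact hH's.apply (Sum.inl i) (Sum.inl j)
  have h21 : H'.toBlocks₂₁ = B₂ᵀ := by
    ext i j
    simp only [Matrix.transpose_apply, hB₂, Matrix.toBlocks₂₁, Matrix.toBlocks₁₂, Matrix.of_apply]
    exact hH's.apply (Sum.inl j) (Sum.inr i)
  have hblocks : H' = Matrix.fromBlocks A B₂ B₂ᵀ C₂ := by
    rw [← h21, hA, hB₂, hC₂, Matrix.fromBlocks_toBlocks]
  -- halve B₂ and C₂
  have hB2dvd : ∀ i j, (2:ℤ) ∣ B₂ i j := fun i j => hcolv _ j
  have hC2dvd : ∀ i j, (2:ℤ) ∣ C₂ i j := fun i j => hcolv _ j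
  set B' : Matrix (Fin n₂) (Fin (n - n₂)) ℤ := Matrix.of fun i j => B₂ i j / 2 with hB'
  set C' : Matrix (Fin (n - n₂)) (Fin (n - n₂)) ℤ := Matrix.of fun i j => C₂ i j / 2 with hC'
  have hB2 : B₂ = (2:ℤ) • B' := by
    ext i j
    simp only [hB', Matrix.smul_apply, Matrix.of_apply, smul_eq_mul]
    exact (Int.mul_ediv_cancel' (hB2dvd i j)).symm
  have hC2 : C₂ = (2:ℤ) • C' := by
    ext i j
    simp only [hC', Matrix.smul_apply, Matrix.of_apply, smul_eq_mul]
    exact (Int.mul_ediv_cancel' (hC2dvd i j)).symm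
  have hC's : C'.IsSymm := by
    rw [Matrix.IsSymm]
    ext i j
    have h1 : C₂ j i = C₂ i j := by
      simp only [hC₂, Matrix.toBlocks₂₂, Matrix.of_apply]
      exact hH's.apply (Sum.inr i) (Sum.inr j)
    simp only [hC', Matrix.transpose_apply, Matrix.of_apply, h1]
  -- the adjugate trick
  set d := A.det with hd
  set X : Matrix (Fin n₂) (Fin (n - n₂)) ℤ := -(A.adjugate * B₂) with hX
  set N := Matrix.fromBlocks (1 : Matrix (Fin n₂) (Fin n₂) ℤ) X 0
      (d • (1 : Matrix (Fin (n - n₂)) (Fin (n - n₂)) ℤ)) with hN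
  have hadjs : A.adjugateᵀ = A.adjugate := by
    rw [Matrix.adjugate_transpose, hAs.eq]
  have hAX : A * X = -(d • B₂) := by
    rw [hX, Matrix.mul_neg, ← Matrix.mul_assoc, Matrix.mul_adjugate, Matrix.smul_mul,
      Matrix.one_mul, ← hd]
  have hXA : Xᵀ * A = -(d • B₂ᵀ) := by
    rw [hX, Matrix.transpose_neg, Matrix.transpose_mul, hadjs, Matrix.neg_mul,
      Matrix.mul_assoc, Matrix.adjugate_mul, Matrix.mul_smul, Matrix.mul_one]
  set S : Matrix (Fin (n - n₂)) (Fin (n - n₂)) ℤ := B'ᵀ * A.adjugate * B' with hS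
  set G₂ : Matrix (Fin (n - n₂)) (Fin (n - n₂)) ℤ := (d * d) • C' - (2 * d) • S with hG₂
  have hG₂s : G₂.IsSymm := by
    have hSs : S.IsSymm := by
      rw [Matrix.IsSymm, hS, Matrix.transpose_mul, Matrix.transpose_mul, Matrix.transpose_transpose,
        hadjs, Matrix.mul_assoc]
    rw [Matrix.IsSymm, hG₂, Matrix.transpose_sub, Matrix.transpose_smul, Matrix.transpose_smul,
      hC's.eq, hSs.eq]
  have hNt : Nᵀ = Matrix.fromBlocks (1 : Matrix (Fin n₂) (Fin n₂) ℤ) 0 Xᵀ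
      (d • (1 : Matrix (Fin (n - n₂)) (Fin (n - n₂)) ℤ)) := by
    rw [hN, Matrix.fromBlocks_transpose, Matrix.transpose_one, Matrix.transpose_zero,
      Matrix.transpose_smul, Matrix.transpose_one]
  have hkey : Nᵀ * H' * N = Matrix.fromBlocks A 0 0 ((2:ℤ) • G₂) := by
    rw [hblocks, hNt, hN, Matrix.fromBlocks_multiply, Matrix.fromBlocks_multiply,
      Matrix.fromBlocks_inj]
    have e1 : Xᵀ * B₂ = -((4:ℤ) • (B'ᵀ * A.adjugate * B')) := by
      rw [hX, hB2]
      simp only [Matrix.transpose_neg, Matrix.transpose_mul, hadjs, Matrix.neg_mul,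
        Matrix.transpose_smul, Matrix.smul_mul, Matrix.mul_smul, smul_smul, Matrix.mul_assoc]
      module
    refine ⟨?_, ?_, ?_, ?_⟩
    · simp only [Matrix.one_mul, Matrix.mul_one, Matrix.zero_mul, Matrix.mul_zero, add_zero]
    · simp only [Matrix.one_mul, Matrix.zero_mul, Matrix.mul_zero, add_zero, zero_add,
        Matrix.mul_smul, Matrix.mul_one, hAX]
      exact neg_add_cancel _
    · simp only [Matrix.mul_one, Matrix.zero_mul, Matrix.mul_zero, add_zero, zero_add,
        Matrix.smul_mul, Matrix.one_mul, hXA]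
      exact neg_add_cancel _
    · simp only [hXA, Matrix.smul_mul, Matrix.one_mul, Matrix.mul_zero, Matrix.zero_mul,
        add_zero, zero_add, neg_add_cancel, Matrix.mul_smul, Matrix.mul_one, e1, hC2]
      rw [hG₂, hS]
      module
  have hNdet : Odd N.det := by
    rw [hN, Matrix.det_fromBlocks_zero₂₁, Matrix.det_one, one_mul, Matrix.det_smul,
      Matrix.det_one, mul_one]
    exact hAdet.pow
  set P := N.submatrix e e with hP
  have hPdet : P.det = N.det := Matrix.det_submatrix_equiv_self e N
  refine ⟨n₂, hle, M * P, A, G₂, e, ?_, hAs, hAdet, hG₂s, ?_⟩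
  · rw [Matrix.det_mul, hPdet]
    exact hMdet.mul hNdet
  · have hHsub : H'.submatrix e e = H := by
      rw [hH', Matrix.submatrix_submatrix]
      simp only [Equiv.symm_comp_self, Matrix.submatrix_id_id]
    have hPt : Pᵀ = Nᵀ.submatrix e e := by
      rw [hP, Matrix.transpose_submatrix]
    have step1 : (M * P)ᵀ * G * (M * P) = Pᵀ * H * P := by
      rw [Matrix.transpose_mul, hHdef]
      simp only [Matrix.mul_assoc]
    rw [step1, hPt, hP, ← hHsub, Matrix.submatrix_mul_equiv, Matrix.submatrix_mul_equiv, hkey]
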